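/- Algebraic form of Lemma 2.6: Let n ≥ 4, let W : Fin n → Fin n → Fin n → Fin n → ℝ be an algebraic Weyl tensor, and let A be a real symmetric n×n matrix with trace zero. Then | − Σ_{i,j,k,l} W_{ijkl} A_{ik} A_{jl} + (n/(n−2))·tr(A³) | ≤ √((n−2)/(2(n−1))) · ( ‖W‖² + (2n/(n−2))·‖A‖² )^{1/2} · ‖A‖², where tr(A³) = Σ_{i,j,k} A_{ij}A_{jk}A_{ki}, ‖W‖² = Σ_{i,j,k,l} W_{ijkl}², and ‖A‖² = Σ_{i,j} A_{ij}². -/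

import Mathlib

open Finset

private def dlt (n : ℕ) (i j : Fin n) : ℝ := if i = j then 1 else 0

private def kn (n : ℕ) (h : Fin n → Fin n → ℝ) (i j k l : Fin n) : ℝ :=
  h i k * dlt n j l + h j l * dlt n i k - h i l * dlt n j k - h j k * dlt n i l

private def Smat {n : ℕ} (A : Fin n → Fin n → ℝ) (i j k l : Fin n) : ℝ :=
  A i k * A j l - A i l * A j k

private def AAm {n : ℕ} (A : Fin n → Fin n → ℝ) (i j : Fin n) : ℝ := ∑ k, A i k * A j k

private lemma sum3_swap23 {n : ℕ} (f : Fin n → Fin n → Fin n → ℝ) :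
    ∑ i, ∑ j, ∑ k, f i j k = ∑ i, ∑ k, ∑ j, f i j k :=
  Finset.sum_congr rfl fun _ _ => Finset.sum_comm

private lemma sum3_rot {n : ℕ} (f : Fin n → Fin n → Fin n → Fin n → ℝ) : True := trivial

private lemma sum3_rot' {n : ℕ} (f : Fin n → Fin n → Fin n → ℝ) :
    ∑ i, ∑ j, ∑ k, f i j k = ∑ j, ∑ k, ∑ i, f i j k := by
  rw [Finset.sum_comm]; exact Finset.sum_congr rfl fun _ _ => Finset.sum_comm

private lemma sum4_congr {n : ℕ} {f g : Fin n → Fin n → Fin n → Fin n → ℝ}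
    (h : ∀ i j k l, f i j k l = g i j k l) :
    ∑ i, ∑ j, ∑ k, ∑ l, f i j k l = ∑ i, ∑ j, ∑ k, ∑ l, g i j k l :=
  Finset.sum_congr rfl fun i _ => Finset.sum_congr rfl fun j _ =>
    Finset.sum_congr rfl fun k _ => Finset.sum_congr rfl fun l _ => h i j k l

private lemma pair_kn {n : ℕ} (X : Fin n → Fin n → Fin n → Fin n → ℝ) (h : Fin n → Fin n → ℝ) :
    ∑ i, ∑ j, ∑ k, ∑ l, X i j k l * kn n h i j k l
    = (∑ i, ∑ j, ∑ k, X i j k j * h i k) + (∑ i, ∑ j, ∑ k, X i j i k * h j k)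
      - (∑ i, ∑ j, ∑ k, X i j j k * h i k) - (∑ i, ∑ j, ∑ k, X i j k i * h j k) := by
  simp only [kn, dlt, mul_add, mul_sub, Finset.sum_add_distrib, Finset.sum_sub_distrib,
    mul_ite, mul_one, mul_zero, ite_mul, Finset.sum_ite_eq, Finset.sum_ite_eq', Finset.mem_univ,
    if_true, Finset.sum_ite_irrel, Finset.sum_const_zero]

private lemma kn_kn {n : ℕ} (z h : Fin n → Fin n → ℝ) :
    ∑ i, ∑ j, ∑ k, ∑ l, kn n z i j k l * kn n h i j k l
    = 4*((n:ℝ)-2) * (∑ i, ∑ k, z i k * h i k) + 4 * (∑ i, z i i) * (∑ j, h j j) := by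
  rw [pair_kn]
  simp only [kn, dlt, add_mul, sub_mul, mul_ite, mul_one, mul_zero, ite_mul, zero_mul,
    Finset.sum_add_distrib, Finset.sum_sub_distrib, Finset.sum_ite_eq, Finset.sum_ite_eq',
    Finset.mem_univ, if_true, Finset.sum_ite_irrel, Finset.sum_const_zero, Finset.sum_const,
    Finset.card_univ, Fintype.card_fin, nsmul_eq_mul, Finset.mul_sum, Finset.sum_mul]
  rw [Finset.sum_comm (f := fun x y => z x x * h y y),
      Finset.sum_comm (f := fun x y => z y x * h y x)]
  simp only [← Finset.sum_add_distrib, ← Finset.sum_sub_distrib]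
  exact Finset.sum_congr rfl fun i _ => Finset.sum_congr rfl fun k _ => by ring

private lemma CS4 {n : ℕ} (f g : Fin n → Fin n → Fin n → Fin n → ℝ) :
    (∑ i, ∑ j, ∑ k, ∑ l, f i j k l * g i j k l)^2
    ≤ (∑ i, ∑ j, ∑ k, ∑ l, f i j k l ^ 2) * (∑ i, ∑ j, ∑ k, ∑ l, g i j k l ^ 2) := by
  have h := Finset.sum_mul_sq_le_sq_mul_sq Finset.univ
    (fun p : Fin n × Fin n × Fin n × Fin n => f p.1 p.2.1 p.2.2.1 p.2.2.2)
    (fun p : Fin n × Fin n × Fin n × Fin n => g p.1 p.2.1 p.2.2.1 p.2.2.2)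
  simpa [Fintype.sum_prod_type] using h

private lemma CS2 {n : ℕ} (f g : Fin n → Fin n → ℝ) :
    (∑ i, ∑ j, f i j * g i j)^2 ≤ (∑ i, ∑ j, f i j ^ 2) * (∑ i, ∑ j, g i j ^ 2) := by
  have h := Finset.sum_mul_sq_le_sq_mul_sq Finset.univ
    (fun p : Fin n × Fin n => f p.1 p.2) (fun p : Fin n × Fin n => g p.1 p.2)
  simpa [Fintype.sum_prod_type] using h

section withW
variable {n : ℕ} (W : Fin n → Fin n → Fin n → Fin n → ℝ)
  (hW1 : ∀ i j k l, W i j k l = - W j i k l)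
  (hW2 : ∀ i j k l, W i j k l = - W i j l k)
  (hTraceFree : ∀ j l, ∑ i, W i j i l = 0)

include hW1 hW2 hTraceFree in
private lemma W_tr24 (i k : Fin n) : ∑ j, W i j k j = 0 := by
  have : ∀ j, W i j k j = W j i j k := by
    intro j; rw [hW1 i j k j, hW2 j i k j]; ring
  rw [Finset.sum_congr rfl fun j _ => this j]; exact hTraceFree i k

include hW1 hW2 hTraceFree in
private lemma W_kn (h : Fin n → Fin n → ℝ) :
    ∑ i, ∑ j, ∑ k, ∑ l, W i j k l * kn n h i j k l = 0 := by
  rw [pair_kn]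
  have T1 : ∑ i, ∑ j, ∑ k, W i j k j * h i k = 0 := by
    rw [sum3_swap23]
    refine Finset.sum_eq_zero fun i _ => Finset.sum_eq_zero fun k _ => ?_
    rw [← Finset.sum_mul, W_tr24 W hW1 hW2 hTraceFree, zero_mul]
  have T2 : ∑ i, ∑ j, ∑ k, W i j i k * h j k = 0 := by
    rw [sum3_rot']
    refine Finset.sum_eq_zero fun j _ => Finset.sum_eq_zero fun k _ => ?_
    rw [← Finset.sum_mul, hTraceFree j k, zero_mul]
  have T3 : ∑ i, ∑ j, ∑ k, W i j j k * h i k = 0 := by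
    rw [sum3_swap23]
    refine Finset.sum_eq_zero fun i _ => Finset.sum_eq_zero fun k _ => ?_
    rw [← Finset.sum_mul]
    have : ∀ j, W i j j k = - W i j k j := fun j => hW2 i j j k
    rw [Finset.sum_congr rfl fun j _ => this j, Finset.sum_neg_distrib,
      W_tr24 W hW1 hW2 hTraceFree, neg_zero, zero_mul]
  have T4 : ∑ i, ∑ j, ∑ k, W i j k i * h j k = 0 := by
    rw [sum3_rot']
    refine Finset.sum_eq_zero fun j _ => Finset.sum_eq_zero fun k _ => ?_
    rw [← Finset.sum_mul]
    have : ∀ i, W i j k i = - W i j i k := fun i => hW2 i j k i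
    rw [Finset.sum_congr rfl fun i _ => this i, Finset.sum_neg_distrib,
      hTraceFree j k, neg_zero, zero_mul]
  rw [T1, T2, T3, T4]; ring

include hW2 in
private lemma W_S (A : Fin n → Fin n → ℝ) :
    ∑ i, ∑ j, ∑ k, ∑ l, W i j k l * Smat A i j k l
    = 2 * ∑ i, ∑ j, ∑ k, ∑ l, W i j k l * (A i k * A j l) := by
  have key : ∀ i j, ∑ k, ∑ l, W i j k l * (A i l * A j k)
      = ∑ k, ∑ l, -(W i j k l * (A i k * A j l)) := by
    intro i j
    rw [Finset.sum_comm]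
    exact Finset.sum_congr rfl fun k _ => Finset.sum_congr rfl fun l _ => by
      rw [hW2 i j l k]; ring
  have : ∀ i j, ∑ k, ∑ l, W i j k l * Smat A i j k l
      = ∑ k, ∑ l, (W i j k l * (A i k * A j l) - W i j k l * (A i l * A j k)) := by
    intro i j
    exact Finset.sum_congr rfl fun k _ => Finset.sum_congr rfl fun l _ => by
      simp only [Smat]; ring
  calc ∑ i, ∑ j, ∑ k, ∑ l, W i j k l * Smat A i j k l
      = ∑ i, ∑ j, ((∑ k, ∑ l, W i j k l * (A i k * A j l))
          - ∑ k, ∑ l, W i j k l * (A i l * A j k)) := by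
        refine Finset.sum_congr rfl fun i _ => Finset.sum_congr rfl fun j _ => ?_
        rw [this i j]
        simp only [Finset.sum_sub_distrib]
    _ = ∑ i, ∑ j, (2 * ∑ k, ∑ l, W i j k l * (A i k * A j l)) := by
        refine Finset.sum_congr rfl fun i _ => Finset.sum_congr rfl fun j _ => ?_
        rw [key i j]
        simp only [Finset.sum_neg_distrib]; ring
    _ = 2 * ∑ i, ∑ j, ∑ k, ∑ l, W i j k l * (A i k * A j l) := by
        simp only [Finset.mul_sum]
end withW
section part2
variable {n : ℕ} (A : Fin n → Fin n → ℝ)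

private lemma S_S :
    ∑ i, ∑ j, ∑ k, ∑ l, Smat A i j k l ^ 2
    = 2 * (∑ i, ∑ j, A i j ^ 2) * (∑ i, ∑ j, A i j ^ 2)
      - 2 * ∑ i, ∑ j, AAm A i j ^ 2 := by
  have key : ∀ i j, ∑ k, ∑ l, Smat A i j k l ^ 2
      = (∑ k, A i k ^ 2) * (∑ l, A j l ^ 2) + (∑ k, A j k ^ 2) * (∑ l, A i l ^ 2)
        - 2 * (AAm A i j * AAm A i j) := by
    intro i j
    rw [Finset.sum_mul_sum, Finset.sum_mul_sum, AAm, Finset.sum_mul_sum]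
    simp only [Finset.mul_sum, ← Finset.sum_add_distrib, ← Finset.sum_sub_distrib]
    exact Finset.sum_congr rfl fun k _ => Finset.sum_congr rfl fun l _ => by
      simp only [Smat]; ring
  calc ∑ i, ∑ j, ∑ k, ∑ l, Smat A i j k l ^ 2
      = ∑ i, ∑ j, ((∑ k, A i k ^ 2) * (∑ l, A j l ^ 2)
          + (∑ k, A j k ^ 2) * (∑ l, A i l ^ 2) - 2 * (AAm A i j * AAm A i j)) :=
        Finset.sum_congr rfl fun i _ => Finset.sum_congr rfl fun j _ => key i j
    _ = _ := by
        simp only [Finset.sum_add_distrib, Finset.sum_sub_distrib, ← Finset.sum_mul,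
          ← Finset.mul_sum]
        simp only [← pow_two]
        ring

private lemma S_kn (hAsymm : ∀ i j, A i j = A j i) (hAtr : ∑ i, A i i = 0)
    (h : Fin n → Fin n → ℝ) :
    ∑ i, ∑ j, ∑ k, ∑ l, Smat A i j k l * kn n h i j k l
    = -4 * ∑ i, ∑ j, AAm A i j * h i j := by
  rw [pair_kn]
  have T1 : ∑ i, ∑ j, ∑ k, Smat A i j k j * h i k = -(∑ i, ∑ k, AAm A i k * h i k) := by
    rw [sum3_swap23]
    have inner : ∀ i k, ∑ j, Smat A i j k j * h i k = -(AAm A i k * h i k) := by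
      intro i k
      have pt : ∀ j, Smat A i j k j * h i k
          = A j j * (A i k * h i k) - (A i j * A k j) * h i k := by
        intro j; simp only [Smat]; rw [hAsymm j k]; ring
      rw [Finset.sum_congr rfl fun j _ => pt j, Finset.sum_sub_distrib, ← Finset.sum_mul,
        ← Finset.sum_mul, hAtr, zero_mul, AAm]; ring
    rw [Finset.sum_congr rfl fun i _ => Finset.sum_congr rfl fun k _ => inner i k]
    simp only [Finset.sum_neg_distrib]
  have T2 : ∑ i, ∑ j, ∑ k, Smat A i j i k * h j k = -(∑ j, ∑ k, AAm A j k * h j k) := by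
    rw [sum3_rot']
    have inner : ∀ j k, ∑ i, Smat A i j i k * h j k = -(AAm A j k * h j k) := by
      intro j k
      have pt : ∀ i, Smat A i j i k * h j k
          = A i i * (A j k * h j k) - (A j i * A k i) * h j k := by
        intro i; simp only [Smat]; rw [hAsymm i k]; ring
      rw [Finset.sum_congr rfl fun i _ => pt i, Finset.sum_sub_distrib, ← Finset.sum_mul,
        ← Finset.sum_mul, hAtr, zero_mul, AAm]; ring
    rw [Finset.sum_congr rfl fun j _ => Finset.sum_congr rfl fun k _ => inner j k]
    simp only [Finset.sum_neg_distrib]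
  have T3 : ∑ i, ∑ j, ∑ k, Smat A i j j k * h i k = ∑ i, ∑ k, AAm A i k * h i k := by
    rw [sum3_swap23]
    have inner : ∀ i k, ∑ j, Smat A i j j k * h i k = AAm A i k * h i k := by
      intro i k
      have pt : ∀ j, Smat A i j j k * h i k
          = (A i j * A k j) * h i k - A j j * (A i k * h i k) := by
        intro j; simp only [Smat]; rw [hAsymm j k]; ring
      rw [Finset.sum_congr rfl fun j _ => pt j, Finset.sum_sub_distrib, ← Finset.sum_mul,
        ← Finset.sum_mul, hAtr, zero_mul, AAm]; ring
    exact Finset.sum_congr rfl fun i _ => Finset.sum_congr rfl fun k _ => inner i k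
  have T4 : ∑ i, ∑ j, ∑ k, Smat A i j k i * h j k = ∑ j, ∑ k, AAm A j k * h j k := by
    rw [sum3_rot']
    have inner : ∀ j k, ∑ i, Smat A i j k i * h j k = AAm A j k * h j k := by
      intro j k
      have pt : ∀ i, Smat A i j k i * h j k
          = (A j i * A k i) * h j k - A i i * (A j k * h j k) := by
        intro i; simp only [Smat]; rw [hAsymm i k]; ring
      rw [Finset.sum_congr rfl fun i _ => pt i, Finset.sum_sub_distrib, ← Finset.sum_mul,
        ← Finset.sum_mul, hAtr, zero_mul, AAm]; ring
    exact Finset.sum_congr rfl fun j _ => Finset.sum_congr rfl fun k _ => inner j k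
  rw [T1, T2, T3, T4]; ring

end part2
section part3
variable {n : ℕ}

private lemma sum2_sq_nonneg (f : Fin n → Fin n → ℝ) :
    0 ≤ ∑ i, ∑ j, f i j ^ 2 :=
  Finset.sum_nonneg fun i _ => Finset.sum_nonneg fun j _ => sq_nonneg _

private lemma sum4_sq_nonneg (f : Fin n → Fin n → Fin n → Fin n → ℝ) :
    0 ≤ ∑ i, ∑ j, ∑ k, ∑ l, f i j k l ^ 2 :=
  Finset.sum_nonneg fun i _ => Finset.sum_nonneg fun j _ =>
    Finset.sum_nonneg fun k _ => Finset.sum_nonneg fun l _ => sq_nonneg _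

private lemma expand_sq (F G H : Fin n → Fin n → Fin n → Fin n → ℝ) (c1 c2 : ℝ) :
    ∑ i, ∑ j, ∑ k, ∑ l, (F i j k l + c1 * G i j k l + c2 * H i j k l)^2
    = (∑ i, ∑ j, ∑ k, ∑ l, F i j k l ^2) + c1^2 * (∑ i, ∑ j, ∑ k, ∑ l, G i j k l ^2)
      + c2^2 * (∑ i, ∑ j, ∑ k, ∑ l, H i j k l ^2)
      + 2*c1*(∑ i, ∑ j, ∑ k, ∑ l, F i j k l * G i j k l)
      + 2*c2*(∑ i, ∑ j, ∑ k, ∑ l, F i j k l * H i j k l)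
      + 2*(c1*c2)*(∑ i, ∑ j, ∑ k, ∑ l, G i j k l * H i j k l) := by
  simp only [Finset.mul_sum, ← Finset.sum_add_distrib]
  exact sum4_congr fun i j k l => by ring

private lemma expand_mul (X F G H : Fin n → Fin n → Fin n → Fin n → ℝ) (c1 c2 : ℝ) :
    ∑ i, ∑ j, ∑ k, ∑ l, X i j k l * (F i j k l + c1 * G i j k l + c2 * H i j k l)
    = (∑ i, ∑ j, ∑ k, ∑ l, X i j k l * F i j k l)
      + c1 * (∑ i, ∑ j, ∑ k, ∑ l, X i j k l * G i j k l)
      + c2 * (∑ i, ∑ j, ∑ k, ∑ l, X i j k l * H i j k l) := by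
  simp only [Finset.mul_sum, ← Finset.sum_add_distrib]
  exact sum4_congr fun i j k l => by ring

private lemma trAA (A : Fin n → Fin n → ℝ) : ∑ i, AAm A i i = ∑ i, ∑ j, A i j ^ 2 := by
  simp only [AAm, ← pow_two]

private lemma dot_dlt (M : Fin n → Fin n → ℝ) :
    ∑ i, ∑ j, M i j * dlt n i j = ∑ i, M i i := by
  simp [dlt]

private lemma dlt_sq : ∑ i : Fin n, ∑ j : Fin n, dlt n i j * dlt n i j = n := by
  simp [dlt]

private lemma dlt_diag : ∑ i : Fin n, dlt n i i = n := by
  simp [dlt]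

private lemma sqrt_cs2 (x1 x2 y1 y2 : ℝ) (hx1 : 0 ≤ x1) (hx2 : 0 ≤ x2)
    (hy1 : 0 ≤ y1) (hy2 : 0 ≤ y2) :
    Real.sqrt (x1*y1) + Real.sqrt (x2*y2) ≤ Real.sqrt (x1+x2) * Real.sqrt (y1+y2) := by
  rw [← Real.sqrt_mul (by linarith), Real.sqrt_mul hx1, Real.sqrt_mul hx2]
  have hcs : (Real.sqrt x1 * Real.sqrt y1 + Real.sqrt x2 * Real.sqrt y2)^2
      ≤ (x1+x2)*(y1+y2) := by
    nlinarith [sq_nonneg (Real.sqrt x1 * Real.sqrt y2 - Real.sqrt x2 * Real.sqrt y1),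
      Real.sq_sqrt hx1, Real.sq_sqrt hx2, Real.sq_sqrt hy1, Real.sq_sqrt hy2,
      Real.sqrt_nonneg x1, Real.sqrt_nonneg x2, Real.sqrt_nonneg y1, Real.sqrt_nonneg y2]
  calc Real.sqrt x1 * Real.sqrt y1 + Real.sqrt x2 * Real.sqrt y2
      = Real.sqrt ((Real.sqrt x1 * Real.sqrt y1 + Real.sqrt x2 * Real.sqrt y2)^2) :=
        (Real.sqrt_sq (by positivity)).symm
    _ ≤ Real.sqrt ((x1+x2)*(y1+y2)) := Real.sqrt_le_sqrt hcs

end part3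
set_option maxHeartbeats 1000000 in
/-- Algebraic form of Lemma 2.6. -/
theorem stmt_0 (n : ℕ) (hn : 4 ≤ n)
    (W : Fin n → Fin n → Fin n → Fin n → ℝ)
    (hW1 : ∀ i j k l, W i j k l = - W j i k l)
    (hW2 : ∀ i j k l, W i j k l = - W i j l k)
    (hW3 : ∀ i j k l, W i j k l = W k l i j)
    (hBianchi : ∀ i j k l, W i j k l + W i k l j + W i l j k = 0)
    (hTraceFree : ∀ j l, ∑ i, W i j i l = 0)
    (A : Fin n → Fin n → ℝ)
    (hAsymm : ∀ i j, A i j = A j i)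
    (hAtr : ∑ i, A i i = 0) :
    |(- ∑ i, ∑ j, ∑ k, ∑ l, W i j k l * A i k * A j l)
      + ((n : ℝ) / ((n : ℝ) - 2)) * ∑ i, ∑ j, ∑ k, A i j * A j k * A k i|
    ≤ Real.sqrt (((n : ℝ) - 2) / (2 * ((n : ℝ) - 1)))
      * Real.sqrt ((∑ i, ∑ j, ∑ k, ∑ l, (W i j k l) ^ 2)
          + (2 * (n : ℝ) / ((n : ℝ) - 2)) * ∑ i, ∑ j, (A i j) ^ 2)
      * ∑ i, ∑ j, (A i j) ^ 2 := by
  have hnR : (4:ℝ) ≤ (n:ℝ) := by exact_mod_cast hn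
  have hn0 : (n:ℝ) ≠ 0 := by linarith
  have hn1 : (n:ℝ) - 1 ≠ 0 := by linarith
  have hn2 : (n:ℝ) - 2 ≠ 0 := by linarith
  set a := ∑ i, ∑ j, A i j ^ 2 with ha
  have ha0 : 0 ≤ a := by rw [ha]; exact sum2_sq_nonneg A
  set t := ∑ i, ∑ j, AAm A i j ^ 2 with ht
  set WAA := ∑ i, ∑ j, ∑ k, ∑ l, W i j k l * A i k * A j l with hWAAdef
  set X1 := ∑ i, ∑ j, ∑ k, ∑ l, W i j k l ^ 2 with hX1
  have hX10 : 0 ≤ X1 := by rw [hX1]; exact sum4_sq_nonneg W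
  set q : ℝ := 2 * (n:ℝ) / ((n:ℝ) - 2) with hq
  have hq0 : 0 ≤ q := by rw [hq]; apply div_nonneg <;> linarith
  set Z : Fin n → Fin n → ℝ := fun i j => AAm A i j - (a / n) * dlt n i j with hZdef
  set c1 : ℝ := 1/((n:ℝ)-2) with hc1
  set c2 : ℝ := a/(2*(n:ℝ)*((n:ℝ)-1)) with hc2
  set V : Fin n → Fin n → Fin n → Fin n → ℝ :=
    fun i j k l => Smat A i j k l + c1 * kn n Z i j k l + c2 * kn n (dlt n) i j k l with hVdef
  -- small facts
  have trA_dlt : ∑ i, ∑ j, A i j * dlt n i j = 0 := by rw [dot_dlt, hAtr]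
  have hAAdlt : ∑ i, ∑ j, AAm A i j * dlt n i j = a := by
    rw [dot_dlt]; exact (trAA A).trans ha.symm
  have htrZ : ∑ i, Z i i = 0 := by
    simp only [hZdef]
    rw [Finset.sum_sub_distrib, trAA, ← Finset.mul_sum, dlt_diag, ← ha]
    field_simp
    ring
  have hZdlt : ∑ i, ∑ j, Z i j * dlt n i j = 0 := by rw [dot_dlt]; exact htrZ
  have hZZsq : ∑ i, ∑ j, Z i j ^ 2 = t - a^2/n := by
    have pt : ∀ i j : Fin n, Z i j ^ 2 = AAm A i j ^2
        - (2*(a/n)) * (AAm A i j * dlt n i j)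
        + ((a/n)*(a/n)) * (dlt n i j * dlt n i j) := by
      intro i j; simp only [hZdef]; ring
    rw [Finset.sum_congr rfl fun i _ => Finset.sum_congr rfl fun j _ => pt i j]
    simp only [Finset.sum_add_distrib, Finset.sum_sub_distrib, ← Finset.mul_sum]
    rw [hAAdlt, dlt_sq, ← ht]
    field_simp; ring
  have hZZ0 : 0 ≤ t - a^2/n := by rw [← hZZsq]; exact sum2_sq_nonneg Z
  have hAAZ : ∑ i, ∑ j, AAm A i j * Z i j = t - a^2/n := by
    have pt : ∀ i j : Fin n, AAm A i j * Z i j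
        = AAm A i j ^2 - (a/n) * (AAm A i j * dlt n i j) := by
      intro i j; simp only [hZdef]; ring
    rw [Finset.sum_congr rfl fun i _ => Finset.sum_congr rfl fun j _ => pt i j]
    simp only [Finset.sum_sub_distrib, ← Finset.mul_sum]
    rw [hAAdlt, ← ht]; ring
  have hAZ : ∑ i, ∑ j, A i j * Z i j = ∑ i, ∑ j, A i j * AAm A i j := by
    have pt : ∀ i j : Fin n, A i j * Z i j
        = A i j * AAm A i j - (a/n) * (A i j * dlt n i j) := by
      intro i j; simp only [hZdef]; ring
    rw [Finset.sum_congr rfl fun i _ => Finset.sum_congr rfl fun j _ => pt i j]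
    simp only [Finset.sum_sub_distrib, ← Finset.mul_sum]
    rw [trA_dlt]; ring
  have hp : ∑ i, ∑ j, ∑ k, A i j * A j k * A k i = ∑ i, ∑ j, A i j * AAm A i j := by
    have e : ∀ i j : Fin n, A i j * AAm A i j = ∑ k, A i j * (A i k * A j k) := by
      intro i j; rw [AAm, Finset.mul_sum]
    rw [Finset.sum_congr rfl fun i _ => Finset.sum_congr rfl fun j _ => e i j]
    refine Finset.sum_congr rfl fun i _ => Finset.sum_congr rfl fun j _ =>
      Finset.sum_congr rfl fun k _ => ?_
    rw [hAsymm k i]; ring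
  have hpz : ∑ i, ∑ j, ∑ k, A i j * A j k * A k i = ∑ i, ∑ j, A i j * Z i j :=
    hp.trans hAZ.symm
  -- pairing values
  have hSSv : ∑ i, ∑ j, ∑ k, ∑ l, Smat A i j k l ^ 2 = 2*a*a - 2*t := by
    rw [S_S, ← ha, ← ht]
  have hSZ : ∑ i, ∑ j, ∑ k, ∑ l, Smat A i j k l * kn n Z i j k l = -4*(t - a^2/n) := by
    rw [S_kn A hAsymm hAtr Z, hAAZ]
  have hSd : ∑ i, ∑ j, ∑ k, ∑ l, Smat A i j k l * kn n (dlt n) i j k l = -4*a := by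
    rw [S_kn A hAsymm hAtr (dlt n), hAAdlt]
  have hZZk : ∑ i, ∑ j, ∑ k, ∑ l, kn n Z i j k l ^ 2
      = 4*((n:ℝ)-2)*(t - a^2/n) := by
    have e : ∑ i, ∑ k, Z i k * Z i k = t - a^2/n := by
      rw [← hZZsq]; exact Finset.sum_congr rfl fun i _ => Finset.sum_congr rfl fun k _ =>
        (pow_two _).symm
    rw [sum4_congr fun i j k l => pow_two (kn n Z i j k l), kn_kn, e, htrZ]; ring
  have hdd : ∑ i, ∑ j, ∑ k, ∑ l, kn n (dlt n) i j k l ^ 2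
      = 4*((n:ℝ)-2)*(n:ℝ) + 4*(n:ℝ)*(n:ℝ) := by
    rw [sum4_congr fun i j k l => pow_two (kn n (dlt n) i j k l), kn_kn, dlt_sq, dlt_diag]
  have hZd2 : ∑ i, ∑ j, ∑ k, ∑ l, kn n Z i j k l * kn n (dlt n) i j k l = 0 := by
    rw [kn_kn, hZdlt, htrZ]; ring
  -- the norm identity
  have hV2 : ∑ i, ∑ j, ∑ k, ∑ l, V i j k l ^ 2
      = (2*a*a - 2*t) + c1^2 * (4*((n:ℝ)-2)*(t - a^2/n))
        + c2^2 * (4*((n:ℝ)-2)*(n:ℝ) + 4*(n:ℝ)*(n:ℝ))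
        + 2*c1*(-4*(t - a^2/n)) + 2*c2*(-4*a) + 2*(c1*c2)*0 := by
    simp only [hVdef]
    rw [expand_sq (Smat A) (kn n Z) (kn n (dlt n)) c1 c2, hSSv, hSZ, hSd, hZZk, hdd, hZd2]
  set Y1 := ∑ i, ∑ j, ∑ k, ∑ l, V i j k l ^ 2 with hY1
  have hY10 : 0 ≤ Y1 := by rw [hY1]; exact sum4_sq_nonneg V
  have hY : Y1 + q * (t - a^2/n) = 2*((n:ℝ)-2)/((n:ℝ)-1) * a^2 := by
    rw [hV2, hc1, hc2, hq]
    field_simp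
    ring
  -- the W pairing
  have hWV : ∑ i, ∑ j, ∑ k, ∑ l, W i j k l * V i j k l = 2 * WAA := by
    simp only [hVdef]
    rw [expand_mul W (Smat A) (kn n Z) (kn n (dlt n)) c1 c2,
      W_kn W hW1 hW2 hTraceFree Z, W_kn W hW1 hW2 hTraceFree (dlt n),
      W_S W hW2 A]
    have e : ∑ i, ∑ j, ∑ k, ∑ l, W i j k l * (A i k * A j l) = WAA := by
      rw [hWAAdef]; exact sum4_congr fun i j k l => (mul_assoc _ _ _).symm
    rw [e]; ring
  set P1 := ∑ i, ∑ j, ∑ k, ∑ l, W i j k l * V i j k l with hP1def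
  set AZ := ∑ i, ∑ j, A i j * Z i j with hAZdef
  have hCS1 : P1^2 ≤ X1 * Y1 := by
    rw [hP1def, hX1, hY1]; exact CS4 W V
  have hCS2 : AZ^2 ≤ a * (t - a^2/n) := by
    have h := CS2 A Z
    rw [← ha, hZZsq] at h
    exact h
  -- representation of the target
  have hrepr : (- WAA) + ((n:ℝ)/((n:ℝ)-2)) * (∑ i, ∑ j, ∑ k, A i j * A j k * A k i)
      = -((P1 - q * AZ)/2) := by
    rw [hpz, hWV, hq]
    field_simp
    ring
  clear_value Y1 P1 AZ V Z c1 c2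
  rw [hrepr, abs_neg, abs_div, abs_two]
  -- bound the two pieces
  have b1 : |P1| ≤ Real.sqrt (X1 * Y1) := by
    rw [← Real.sqrt_sq_eq_abs]; exact Real.sqrt_le_sqrt hCS1
  have b2 : |q * AZ| ≤ Real.sqrt ((q*a) * (q*(t - a^2/n))) := by
    rw [← Real.sqrt_sq_eq_abs]
    apply Real.sqrt_le_sqrt
    have h := mul_le_mul_of_nonneg_left hCS2 (mul_nonneg hq0 hq0)
    calc (q * AZ)^2 = q * q * AZ^2 := by ring
      _ ≤ q * q * (a * (t - a^2/n)) := h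
      _ = (q*a) * (q*(t - a^2/n)) := by ring
  have b3 : |P1 - q * AZ| ≤ Real.sqrt (X1 * Y1) + Real.sqrt ((q*a) * (q*(t - a^2/n))) :=
    (abs_sub _ _).trans (add_le_add b1 b2)
  have hK0 : (0:ℝ) ≤ 2*((n:ℝ)-2)/((n:ℝ)-1) := by apply div_nonneg <;> linarith
  have b4 : Real.sqrt (X1 * Y1) + Real.sqrt ((q*a) * (q*(t - a^2/n)))
      ≤ Real.sqrt (X1 + q*a) * Real.sqrt (Y1 + q*(t - a^2/n)) :=
    sqrt_cs2 X1 (q*a) Y1 (q*(t - a^2/n)) hX10 (mul_nonneg hq0 ha0) hY10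
      (mul_nonneg hq0 hZZ0)
  have hYs : Real.sqrt (Y1 + q*(t - a^2/n)) = Real.sqrt (2*((n:ℝ)-2)/((n:ℝ)-1)) * a := by
    rw [hY, Real.sqrt_mul hK0, Real.sqrt_sq ha0]
  have hhalf : Real.sqrt (2*((n:ℝ)-2)/((n:ℝ)-1)) / 2
      = Real.sqrt (((n:ℝ)-2)/(2*((n:ℝ)-1))) := by
    rw [show ((n:ℝ)-2)/(2*((n:ℝ)-1)) = (2*((n:ℝ)-2)/((n:ℝ)-1))/4 by field_simp; ring,
      Real.sqrt_div hK0,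
      show Real.sqrt 4 = 2 by
        rw [show (4:ℝ) = 2^2 by norm_num, Real.sqrt_sq (by norm_num : (0:ℝ) ≤ 2)]]
  calc |P1 - q * AZ| / 2
      ≤ (Real.sqrt (X1 * Y1) + Real.sqrt ((q*a) * (q*(t - a^2/n)))) / 2 :=
        div_le_div_of_nonneg_right b3 (by norm_num) |>.trans_eq rfl
    _ ≤ (Real.sqrt (X1 + q*a) * Real.sqrt (Y1 + q*(t - a^2/n))) / 2 :=
        div_le_div_of_nonneg_right b4 (by norm_num) |>.trans_eq rfl
    _ = Real.sqrt (((n:ℝ)-2)/(2*((n:ℝ)-1))) * Real.sqrt (X1 + q*a) * a := by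
        rw [hYs, ← hhalf]; ring
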